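/- (Freedman's inequality) Let (A_i)_{i=0}^t be a martingale with respect to a filtration (F_i), with |A_{i+1} - A_i| ≤ b for all i. Let E be the event that there exists j > 0 with A_j ≥ A_0 + a and Σ_{i<j} Var[A_{i+1} | F_i] ≤ v. Then P(E) ≤ exp(-a^2 / (2(v + ab))). -/

import Mathlib

open MeasureTheory Filter

lemma exp_quad_bound {y m : ℝ} (hy : |y| ≤ m) (hm : m ≤ 1) :
    Real.exp y ≤ 1 + y + (1/2 + 2/9 * m) * y ^ 2 := by
  have hy1 : |y| ≤ 1 := hy.trans hm
  have h := Real.exp_bound hy1 (n := 3) (by norm_num)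
  have hsum : ∑ i ∈ Finset.range 3, y ^ i / i.factorial = 1 + y + y ^ 2 / 2 := by
    simp [Finset.sum_range_succ]
  rw [hsum] at h
  have h2 := (abs_le.mp h).2
  have habs : |y| ^ 3 ≤ m * y ^ 2 := by
    have h3 : |y| ^ 3 = |y| * y ^ 2 := by
      rw [pow_succ, sq_abs]; ring
    nlinarith [abs_nonneg y, sq_nonneg y]
  have he : ((3:ℕ).succ : ℝ) / (((3:ℕ).factorial : ℝ) * (3:ℕ)) = 2/9 := by
    norm_num [Nat.factorial]
  rw [he] at h2
  nlinarith

lemma freedman_calc {a b v : ℝ} (ha : 0 < a) (hb : 0 < b) (hv : 0 < v) :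
    (1/2 + 2/9 * (a / (v + a*b) * b)) * (a / (v + a*b))^2 * v - a / (v + a*b) * a
      ≤ -a^2 / (2*(v + a*b)) := by
  have hs : 0 < v + a*b := by positivity
  have key : (1/2 + 2/9 * (a / (v + a*b) * b)) * (a / (v + a*b))^2 * v
      - a / (v + a*b) * a + a^2 / (2*(v + a*b))
      = (a^2 * (v*(v + a*b)/2 + 2/9*a*b*v - (v + a*b)^2/2)) / (v + a*b)^3 := by
    field_simp
    ring
  have hbr : v*(v + a*b)/2 + 2/9*a*b*v - (v + a*b)^2/2 ≤ 0 := by nlinarith [mul_pos ha hb]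
  have hnum : (a^2 * (v*(v + a*b)/2 + 2/9*a*b*v - (v + a*b)^2/2)) / (v + a*b)^3 ≤ 0 :=
    div_nonpos_of_nonpos_of_nonneg (by nlinarith [sq_nonneg a]) (by positivity)
  rw [neg_div]
  linarith [key ▸ hnum]

theorem stmt8 {Ω : Type*} {m0 : MeasurableSpace Ω} {μ : Measure Ω}
    [IsProbabilityMeasure μ]
    (F : Filtration ℕ m0) (A : ℕ → Ω → ℝ) (t : ℕ) (a b v : ℝ)
    (ha : 0 < a) (hb : 0 < b) (hv : 0 < v)
    (hmart : Martingale A F μ)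
    (hbdd : ∀ i ω, |A (i + 1) ω - A i ω| ≤ b) :
    μ {ω | ∃ j, 0 < j ∧ j ≤ t ∧ A 0 ω + a ≤ A j ω ∧
        ∑ i ∈ Finset.range j,
          (μ[fun ω' => (A (i + 1) ω' - A i ω') ^ 2 | F i]) ω ≤ v}
      ≤ ENNReal.ofReal (Real.exp (-a ^ 2 / (2 * (v + a * b)))) := by
  classical
  have hs : 0 < v + a * b := by positivity
  set L : ℝ := a / (v + a * b) with hLdef
  have hL : 0 < L := by positivity
  have hLb : L * b < 1 := by
    rw [hLdef, div_mul_eq_mul_div, div_lt_one hs]; nlinarith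
  set c : ℝ := 1/2 + 2/9 * (L * b) with hcdef
  have hc : 0 < c := by positivity
  set g : ℝ := c * L ^ 2 with hgdef
  have hg : 0 < g := by positivity
  set W : ℕ → Ω → ℝ := fun i => μ[fun ω' => (A (i + 1) ω' - A i ω') ^ 2 | F i] with hWdef
  set V : ℕ → Ω → ℝ := fun j ω => ∑ i ∈ Finset.range j, W i ω with hVdef
  set M : ℕ → Ω → ℝ := fun j ω => Real.exp (L * (A j ω - A 0 ω) - g * V j ω) with hMdef
  -- measurability facts
  have hA : ∀ j, StronglyMeasurable[F j] (A j) := fun j => hmart.stronglyMeasurable j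
  have hWm : ∀ i, StronglyMeasurable[F i] (W i) := fun i => stronglyMeasurable_condExp
  have hVm : ∀ j, StronglyMeasurable[F j] (V j) := by
    intro j
    apply Finset.stronglyMeasurable_fun_sum
    intro i hi
    exact (hWm i).mono (F.mono (Finset.mem_range.mp hi).le)
  have hMm : ∀ j, StronglyMeasurable[F j] (M j) := by
    intro j
    exact Real.continuous_exp.comp_stronglyMeasurable
      ((stronglyMeasurable_const.mul ((hA j).sub ((hA 0).mono (F.mono (Nat.zero_le j))))).sub
        (stronglyMeasurable_const.mul (hVm j)))
  -- generic integrability from bounds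
  have hIb : ∀ (f : Ω → ℝ) (C : ℝ), AEStronglyMeasurable f μ → (∀ᵐ ω ∂μ, |f ω| ≤ C) →
      Integrable f μ := fun f C hm h =>
    (integrable_const C).mono' hm (by simpa [Real.norm_eq_abs] using h)
  -- increments
  have hXm : ∀ i, StronglyMeasurable (fun ω => A (i+1) ω - A i ω) :=
    fun i => ((hA (i+1)).mono (F.le _)).sub ((hA i).mono (F.le _))
  have hXsq_le : ∀ i ω, (A (i+1) ω - A i ω) ^ 2 ≤ b ^ 2 := by
    intro i ω
    have h := abs_le.mp (hbdd i ω)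
    nlinarith [h.1, h.2]
  have hXsq_int : ∀ i, Integrable (fun ω => (A (i+1) ω - A i ω) ^ 2) μ := by
    intro i
    refine hIb _ (b ^ 2) ((hXm i).pow 2).aestronglyMeasurable (Eventually.of_forall fun ω => ?_)
    rw [abs_of_nonneg (sq_nonneg _)]; exact hXsq_le i ω
  have hXint : ∀ i, Integrable (fun ω => A (i+1) ω - A i ω) μ :=
    fun i => ((hmart.integrable (i+1)).sub (hmart.integrable i))
  have hW0 : ∀ i, (0:Ω → ℝ) ≤ᵐ[μ] W i :=
    fun i => condExp_nonneg (Eventually.of_forall fun ω => sq_nonneg _)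
  have hWb : ∀ i, W i ≤ᵐ[μ] fun _ => b ^ 2 := by
    intro i
    have h := condExp_mono (m := F i) (hXsq_int i) (integrable_const (b^2))
      (Eventually.of_forall (hXsq_le i))
    rwa [condExp_const (F.le i)] at h
  -- conditional expectation of the increment is zero
  have hX0 : ∀ i, μ[fun ω => A (i+1) ω - A i ω | F i] =ᵐ[μ] 0 := by
    intro i
    have h1 : μ[fun ω => A (i+1) ω - A i ω | F i]
        =ᵐ[μ] μ[A (i+1) | F i] - μ[A i | F i] := condExp_sub (hmart.integrable _) (hmart.integrable _) (F i)
    have h2 := hmart.condExp_ae_eq (Nat.le_succ i)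
    have h3 := hmart.condExp_ae_eq (le_refl i)
    filter_upwards [h1, h2, h3] with ω e1 e2 e3
    simp only [Pi.sub_apply, Pi.zero_apply] at *
    rw [e1, e2, e3]; ring
  -- exp moment bound
  have hexp_int : ∀ i, Integrable (fun ω => Real.exp (L * (A (i+1) ω - A i ω))) μ := by
    intro i
    refine hIb _ (Real.exp (L * b))
      (Real.continuous_exp.comp_stronglyMeasurable
        (stronglyMeasurable_const.mul (hXm i))).aestronglyMeasurable
      (Eventually.of_forall fun ω => ?_)
    rw [abs_of_pos (Real.exp_pos _), Real.exp_le_exp]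
    have := (abs_le.mp (hbdd i ω)).2
    nlinarith [hL]
  have key : ∀ i, μ[fun ω => Real.exp (L * (A (i+1) ω - A i ω)) | F i]
      ≤ᵐ[μ] fun ω => Real.exp (g * W i ω) := by
    intro i
    have hpt : ∀ ω, Real.exp (L * (A (i+1) ω - A i ω))
        ≤ 1 + L * (A (i+1) ω - A i ω) + g * (A (i+1) ω - A i ω) ^ 2 := by
      intro ω
      have hy : |L * (A (i+1) ω - A i ω)| ≤ L * b := by
        rw [abs_mul, abs_of_pos hL]
        exact mul_le_mul_of_nonneg_left (hbdd i ω) hL.le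
      have h := exp_quad_bound hy hLb.le
      calc Real.exp (L * (A (i+1) ω - A i ω))
          ≤ 1 + L * (A (i+1) ω - A i ω) + c * (L * (A (i+1) ω - A i ω)) ^ 2 := h
        _ = 1 + L * (A (i+1) ω - A i ω) + g * (A (i+1) ω - A i ω) ^ 2 := by
            rw [hgdef]; ring
    have hXs : Integrable (L • fun ω => A (i+1) ω - A i ω) μ := (hXint i).smul L
    have hXsqs : Integrable (g • fun ω => (A (i+1) ω - A i ω) ^ 2) μ := (hXsq_int i).smul g
    have hrhs_int : Integrable
        (fun ω => 1 + L * (A (i+1) ω - A i ω) + g * (A (i+1) ω - A i ω) ^ 2) μ :=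
      ((integrable_const 1).add ((hXint i).const_mul L)).add ((hXsq_int i).const_mul g)
    have h1 : μ[fun ω => Real.exp (L * (A (i+1) ω - A i ω)) | F i]
        ≤ᵐ[μ] μ[fun ω => 1 + L * (A (i+1) ω - A i ω) + g * (A (i+1) ω - A i ω) ^ 2 | F i] :=
      condExp_mono (hexp_int i) hrhs_int (Eventually.of_forall hpt)
    have h2 : μ[fun ω => 1 + L * (A (i+1) ω - A i ω) + g * (A (i+1) ω - A i ω) ^ 2 | F i]
        =ᵐ[μ] fun ω => 1 + g * W i ω := by
      have e0 : (fun ω => 1 + L * (A (i+1) ω - A i ω) + g * (A (i+1) ω - A i ω) ^ 2)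
          = (fun _ : Ω => (1:ℝ)) + ((L • fun ω => A (i+1) ω - A i ω)
              + (g • fun ω => (A (i+1) ω - A i ω) ^ 2)) := by
        funext ω
        simp only [Pi.add_apply, Pi.smul_apply, smul_eq_mul]
        ring
      rw [e0]
      have ha1 := condExp_add (μ := μ) (m := F i) (integrable_const (1:ℝ)) (hXs.add hXsqs)
      have ha2 := condExp_add (μ := μ) (m := F i) hXs hXsqs
      have ha3 := condExp_smul (μ := μ) (m := F i) L (fun ω => A (i+1) ω - A i ω)
      have ha4 := condExp_smul (μ := μ) (m := F i) g (fun ω => (A (i+1) ω - A i ω) ^ 2)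
      filter_upwards [ha1, ha2, ha3, ha4, hX0 i] with ω e1 e2 e3 e4 e5
      rw [e1]
      simp only [Pi.add_apply, Pi.smul_apply, smul_eq_mul] at *
      rw [condExp_const (F.le i)]
      rw [e2, e3, e4, e5]
      simp [hWdef]
    have h3 : (fun ω => 1 + g * W i ω) ≤ᵐ[μ] fun ω => Real.exp (g * W i ω) :=
      Eventually.of_forall fun ω => by
        show 1 + g * W i ω ≤ Real.exp (g * W i ω)
        have := Real.add_one_le_exp (g * W i ω); linarith
    exact h1.trans (h2.le.trans h3)
  -- the exponential process is a supermartingale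
  have hMpos : ∀ j ω, 0 < M j ω := fun j ω => Real.exp_pos _
  have hAb : ∀ j ω, |A j ω - A 0 ω| ≤ j * b := by
    intro j ω
    induction j with
    | zero => simp [hb.le]
    | succ n ih =>
      calc |A (n+1) ω - A 0 ω| ≤ |A (n+1) ω - A n ω| + |A n ω - A 0 ω| := abs_sub_le _ _ _
        _ ≤ b + n * b := add_le_add (hbdd n ω) ih
        _ = (n+1 : ℕ) * b := by push_cast; ring
  have hMint : ∀ j, Integrable (M j) μ := by
    intro j
    refine hIb _ (Real.exp (L * (j * b))) ((hMm j).mono (F.le j)).aestronglyMeasurable ?_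
    have hWae : ∀ᵐ ω ∂μ, ∀ i, 0 ≤ W i ω := ae_all_iff.mpr fun i => hW0 i
    filter_upwards [hWae] with ω hω
    rw [abs_of_pos (hMpos j ω), Real.exp_le_exp]
    have hV0 : 0 ≤ V j ω := Finset.sum_nonneg fun i _ => hω i
    have h1 : L * (A j ω - A 0 ω) ≤ L * (j * b) :=
      mul_le_mul_of_nonneg_left ((abs_le.mp (hAb j ω)).2) hL.le
    nlinarith [hg.le]
  have hstep : ∀ i, μ[M (i+1) | F i] ≤ᵐ[μ] M i := by
    intro i
    have hfac : M (i+1) = (fun ω => M i ω * Real.exp (-(g * W i ω)))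
        * (fun ω => Real.exp (L * (A (i+1) ω - A i ω))) := by
      funext ω
      show M (i+1) ω = M i ω * Real.exp (-(g * W i ω)) * Real.exp (L * (A (i+1) ω - A i ω))
      rw [hMdef]
      simp only
      rw [← Real.exp_add, ← Real.exp_add]
      congr 1
      have hV : V (i+1) ω = V i ω + W i ω := Finset.sum_range_succ _ _
      rw [hV]
      ring
    have hfm : StronglyMeasurable[F i] (fun ω => M i ω * Real.exp (-(g * W i ω))) :=
      (hMm i).mul (Real.continuous_exp.comp_stronglyMeasurable
        (stronglyMeasurable_const.mul (hWm i)).neg)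
    have hfg_int : Integrable ((fun ω => M i ω * Real.exp (-(g * W i ω)))
        * fun ω => Real.exp (L * (A (i+1) ω - A i ω))) μ := by
      rw [← hfac]; exact hMint (i+1)
    have hpull := condExp_mul_of_stronglyMeasurable_left hfm hfg_int (hexp_int i)
    rw [hfac]
    filter_upwards [hpull, key i] with ω e1 e2
    rw [e1]
    simp only [Pi.mul_apply]
    have hnn : 0 ≤ M i ω * Real.exp (-(g * W i ω)) := by positivity
    calc M i ω * Real.exp (-(g * W i ω)) * (μ[fun ω' => Real.exp (L * (A (i+1) ω' - A i ω')) | F i]) ω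
        ≤ M i ω * Real.exp (-(g * W i ω)) * Real.exp (g * W i ω) := mul_le_mul_of_nonneg_left e2 hnn
      _ = M i ω := by rw [mul_assoc, ← Real.exp_add]; simp
  have hsuper : Supermartingale M F μ := supermartingale_nat (fun j => hMm j) hMint hstep
  -- stopping time argument
  set x : ℝ := Real.exp (L * a - g * v) with hxdef
  have hx : 0 < x := Real.exp_pos _
  set τ : Ω → WithTop ℕ := fun ω => ((hittingBtwn M (Set.Ici x) 0 t ω : ℕ) : WithTop ℕ) with hτdef
  have hτ : IsStoppingTime F τ := hsuper.stronglyAdapted.adapted.isStoppingTime_hittingBtwn measurableSet_Ici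
  have hτle : ∀ ω, τ ω ≤ t := fun ω => WithTop.coe_le_coe.mpr (hittingBtwn_le ω)
  have hsv_int : Integrable (stoppedValue M τ) μ := integrable_stoppedValue ℕ hτ hMint hτle
  have hOST : ∫ ω, stoppedValue M τ ω ∂μ ≤ ∫ ω, M 0 ω ∂μ := by
    have h := hsuper.neg.expected_stoppedValue_mono (isStoppingTime_const F 0) hτ
      (fun ω => bot_le) hτle
    have e1 : stoppedValue (-M) (fun _ => (WithTop.some (0:ℕ))) = -stoppedValue M (fun _ => (WithTop.some (0:ℕ))) := rfl
    have e2 : stoppedValue (-M) τ = -stoppedValue M τ := rfl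
    rw [e1, e2] at h
    simp only [Pi.neg_apply] at h
    rw [integral_neg, integral_neg, neg_le_neg_iff] at h
    have e3 : stoppedValue M (fun _ => (WithTop.some (0:ℕ))) = M 0 := by
      funext ω; simp [stoppedValue]
    rw [e3] at h
    exact h
  have hM0 : ∫ ω, M 0 ω ∂μ = 1 := by
    have e : M 0 = fun _ => (1:ℝ) := by
      funext ω
      rw [hMdef]
      simp [hVdef]
    rw [e]
    simp
  set Eset : Set Ω := {ω | ∃ j, 0 < j ∧ j ≤ t ∧ A 0 ω + a ≤ A j ω ∧
      ∑ i ∈ Finset.range j, W i ω ≤ v} with hEdef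
  have hEsub : ∀ ω ∈ Eset, x ≤ stoppedValue M τ ω := by
    rintro ω ⟨j, hj0, hjt, hAj, hVj⟩
    have hMj : x ≤ M j ω := by
      rw [hMdef, hxdef]
      simp only
      rw [Real.exp_le_exp]
      have h1 : L * a ≤ L * (A j ω - A 0 ω) := by
        apply mul_le_mul_of_nonneg_left _ hL.le
        linarith
      have h2 : g * V j ω ≤ g * v := mul_le_mul_of_nonneg_left hVj hg.le
      linarith
    have hex : ∃ k ∈ Set.Icc 0 t, M k ω ∈ Set.Ici x := ⟨j, ⟨Nat.zero_le _, hjt⟩, hMj⟩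
    show x ≤ M (hittingBtwn M (Set.Ici x) 0 t ω) ω
    exact hittingBtwn_mem_set hex
  have hEmeas : MeasurableSet Eset := by
    have e : Eset = ⋃ j ∈ Finset.Icc 1 t,
        ({ω | A 0 ω + a ≤ A j ω} ∩ {ω | V j ω ≤ v}) := by
      ext ω
      simp only [hEdef, Set.mem_setOf_eq, Set.mem_iUnion, Set.mem_inter_iff, Finset.mem_Icc]
      constructor
      · rintro ⟨j, h1, h2, h3, h4⟩; exact ⟨j, ⟨h1, h2⟩, h3, h4⟩
      · rintro ⟨j, ⟨h1, h2⟩, h3, h4⟩; exact ⟨j, h1, h2, h3, h4⟩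
    rw [e]
    refine MeasurableSet.biUnion (Finset.Icc 1 t).countable_toSet fun j _ => ?_
    refine MeasurableSet.inter ?_ ?_
    · exact measurableSet_le (((hA 0).mono (F.le 0)).measurable.add_const a)
        ((hA j).mono (F.le j)).measurable
    · exact measurableSet_le ((hVm j).mono (F.le j)).measurable measurable_const
  have hsv_nonneg : ∀ ω, 0 ≤ stoppedValue M τ ω := fun ω => (hMpos _ ω).le
  have hxE : x * (μ Eset).toReal ≤ 1 := by
    have c1 : x * (μ Eset).toReal = ∫ _ω in Eset, x ∂μ := by
      rw [setIntegral_const, smul_eq_mul, mul_comm]; rfl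
    have c2 : ∫ _ω in Eset, x ∂μ ≤ ∫ ω in Eset, stoppedValue M τ ω ∂μ := by
      refine setIntegral_mono_on (integrableOn_const (measure_ne_top μ _))
        hsv_int.integrableOn hEmeas ?_
      intro ω hω
      exact hEsub ω hω
    have c3 : ∫ ω in Eset, stoppedValue M τ ω ∂μ ≤ ∫ ω, stoppedValue M τ ω ∂μ :=
      setIntegral_le_integral hsv_int (Eventually.of_forall hsv_nonneg)
    rw [c1]
    exact le_trans c2 (le_trans c3 (le_trans hOST hM0.le))
  have hEr : (μ Eset).toReal ≤ Real.exp (g * v - L * a) := by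
    have h1 : (μ Eset).toReal ≤ 1 / x := by
      rw [le_div_iff₀ hx, mul_comm]
      exact hxE
    have h2 : 1 / x = Real.exp (g * v - L * a) := by
      rw [hxdef, one_div, ← Real.exp_neg]
      ring_nf
    rwa [h2] at h1
  have hfin : g * v - L * a ≤ -a ^ 2 / (2 * (v + a * b)) := by
    have := freedman_calc ha hb hv
    rw [hgdef, hcdef, hLdef]
    linarith
  calc μ Eset = ENNReal.ofReal ((μ Eset).toReal) :=
        (ENNReal.ofReal_toReal (measure_ne_top μ _)).symm
    _ ≤ ENNReal.ofReal (Real.exp (-a ^ 2 / (2 * (v + a * b)))) :=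
        ENNReal.ofReal_le_ofReal (hEr.trans (Real.exp_le_exp.mpr hfin))
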